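/- Let H ∈ (0,1). Then ∫_0^1 ∫_0^1 [x^{2H} + (x+u−s)^{2H} − (x+u)^{2H} − (x−u)^{2H}] ds du = −(H(2H−1)/2) x^{2H−2} + o(x^{2H−2}) as x → ∞; that is, the difference between the left-hand side and −(H(2H−1)/2) x^{2H−2}, divided by x^{2H−2}, tends to 0 as x → ∞. -/

import Mathlib

open MeasureTheory Filter Set Topology

lemma hd_add (e a : ℝ) (h : 1 + a ≠ 0) :
    HasDerivAt (fun t : ℝ => (1+t)^e) (e*(1+a)^(e-1)) a := by
  have h1 : HasDerivAt (fun t : ℝ => 1 + t) 1 a := by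
    simpa using (hasDerivAt_id a).const_add (1:ℝ)
  have := h1.rpow_const (p := e) (Or.inl h)
  simpa using this

lemma hd_sub (e a : ℝ) (h : 1 - a ≠ 0) :
    HasDerivAt (fun t : ℝ => (1-t)^e) (-(e*(1-a)^(e-1))) a := by
  have h1 : HasDerivAt (fun t : ℝ => 1 - t) (-1) a := by
    simpa using (hasDerivAt_id a).const_sub (1:ℝ)
  have := h1.rpow_const (p := e) (Or.inl h)
  convert this using 1; ring

lemma tendsto_one_add (e : ℝ) :
    Tendsto (fun a : ℝ => (1+a)^e) (𝓝[>] (0:ℝ)) (𝓝 1) := by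
  have h : ContinuousAt (fun a : ℝ => (1+a)^e) 0 := by
    apply ContinuousAt.rpow_const (by fun_prop)
    left; norm_num
  have := h.tendsto
  norm_num [Real.one_rpow] at this
  exact this.mono_left nhdsWithin_le_nhds

lemma tendsto_one_sub (e : ℝ) :
    Tendsto (fun a : ℝ => (1-a)^e) (𝓝[>] (0:ℝ)) (𝓝 1) := by
  have h : ContinuousAt (fun a : ℝ => (1-a)^e) 0 := by
    apply ContinuousAt.rpow_const (by fun_prop)
    left; norm_num
  have := h.tendsto
  norm_num [Real.one_rpow] at this
  exact this.mono_left nhdsWithin_le_nhds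

lemma lhop2 (H : ℝ) (hH : H ∈ Set.Ioo (0:ℝ) 1) :
    Tendsto (fun a : ℝ => (2 - (1+a)^(2*H) - (1-a)^(2*H)) / a^2) (𝓝[>] (0:ℝ))
      (𝓝 (-(2*H*(2*H-1)))) := by
  apply HasDerivAt.lhopital_zero_right_on_Ioo (a := (0:ℝ)) (b := 1) one_pos
    (f' := fun a => -((2*H)*(1+a)^(2*H-1)) + (2*H)*(1-a)^(2*H-1))
    (g' := fun a => 2*a)
  · intro t ht
    have h1 : (1:ℝ) + t ≠ 0 := by have := ht.1; intro hc; linarith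
    have h2 : (1:ℝ) - t ≠ 0 := by have := ht.2; intro hc; linarith
    have e1 := hd_add (2*H) t h1
    have e2 := hd_sub (2*H) t h2
    have total := (e1.const_sub 2).sub e2
    exact total.congr_deriv (by ring)
  · intro t ht
    simpa using hasDerivAt_pow 2 t
  · intro t ht
    have := ht.1; positivity
  · have := (tendsto_const_nhds (x := (2:ℝ)) (f := 𝓝[>] (0:ℝ))).sub
      (tendsto_one_add (2*H)) |>.sub (tendsto_one_sub (2*H))
    norm_num at this
    exact this
  · have : Tendsto (fun a : ℝ => a^2) (𝓝 (0:ℝ)) (𝓝 0) := by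
      simpa using (continuous_pow 2).tendsto (0:ℝ)
    exact this.mono_left nhdsWithin_le_nhds
  · -- second L'Hopital
    apply HasDerivAt.lhopital_zero_right_on_Ioo (a := (0:ℝ)) (b := 1) one_pos
      (f' := fun a => -((2*H)*(2*H-1)*(1+a)^(2*H-2)) - (2*H)*(2*H-1)*(1-a)^(2*H-2))
      (g' := fun a => 2)
    · intro t ht
      have h1 : (1:ℝ) + t ≠ 0 := by have := ht.1; intro hc; linarith
      have h2 : (1:ℝ) - t ≠ 0 := by have := ht.2; intro hc; linarith
      have r : (2*H-1)-1 = 2*H-2 := by ring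
      have e1 : HasDerivAt (fun a : ℝ => (1+a)^(2*H-1)) ((2*H-1)*(1+t)^(2*H-2)) t := by
        have := hd_add (2*H-1) t h1; rwa [r] at this
      have e2 : HasDerivAt (fun a : ℝ => (1-a)^(2*H-1)) (-((2*H-1)*(1-t)^(2*H-2))) t := by
        have := hd_sub (2*H-1) t h2; rwa [r] at this
      have total := ((e1.const_mul (2*H)).neg).add (e2.const_mul (2*H))
      exact total.congr_deriv (by ring)
    · intro t ht
      simpa using (hasDerivAt_id t).const_mul (2:ℝ)
    · intro t ht; norm_num
    · have := ((tendsto_one_add (2*H-1)).const_mul (2*H)).neg.add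
        ((tendsto_one_sub (2*H-1)).const_mul (2*H))
      norm_num at this ⊢
      exact this
    · have : Tendsto (fun a : ℝ => 2*a) (𝓝 (0:ℝ)) (𝓝 0) := by
        simpa using (continuous_mul_left (2:ℝ)).tendsto (0:ℝ)
      exact this.mono_left nhdsWithin_le_nhds
    · have := ((tendsto_one_add (2*H-2)).const_mul (2*H*(2*H-1))).neg.sub
        ((tendsto_one_sub (2*H-2)).const_mul (2*H*(2*H-1)))
      have h2 := this.div_const 2
      convert h2 using 2
      ring

noncomputable def Nf (H a : ℝ) : ℝ :=
  (2*H+1)*(2*H+2)*a^2 + (1+a)^(2*H+2) + (1-a)^(2*H+2) - 2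
    - (2*H+2)*a*((1+a)^(2*H+1) - (1-a)^(2*H+1))

lemma lhopN (H : ℝ) (hH : H ∈ Set.Ioo (0:ℝ) 1) :
    Tendsto (fun a : ℝ => Nf H a / a^4) (𝓝[>] (0:ℝ))
      (𝓝 (-((2*H+2)*(2*H+1)*(2*H)*(2*H-1))/4)) := by
  obtain ⟨hH0, hH1⟩ := hH
  apply HasDerivAt.lhopital_zero_right_on_Ioo (a := (0:ℝ)) (b := 1) one_pos
    (f' := fun a => (2*H+2)*(2*H+1)*a*(2 - (1+a)^(2*H) - (1-a)^(2*H)))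
    (g' := fun a => 4*a^3)
  · intro t ht
    have h1 : (1:ℝ) + t ≠ 0 := by have := ht.1; intro hc; linarith
    have h2 : (1:ℝ) - t ≠ 0 := by have := ht.2; intro hc; linarith
    have r1 : (2*H+2)-1 = 2*H+1 := by ring
    have r2 : (2*H+1)-1 = 2*H := by ring
    have e1 : HasDerivAt (fun a : ℝ => (1+a)^(2*H+2)) ((2*H+2)*(1+t)^(2*H+1)) t := by
      have := hd_add (2*H+2) t h1; rwa [r1] at this
    have e2 : HasDerivAt (fun a : ℝ => (1-a)^(2*H+2)) (-((2*H+2)*(1-t)^(2*H+1))) t := by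
      have := hd_sub (2*H+2) t h2; rwa [r1] at this
    have e3 : HasDerivAt (fun a : ℝ => (1+a)^(2*H+1)) ((2*H+1)*(1+t)^(2*H)) t := by
      have := hd_add (2*H+1) t h1; rwa [r2] at this
    have e4 : HasDerivAt (fun a : ℝ => (1-a)^(2*H+1)) (-((2*H+1)*(1-t)^(2*H))) t := by
      have := hd_sub (2*H+1) t h2; rwa [r2] at this
    have p1 : HasDerivAt (fun a : ℝ => (2*H+1)*(2*H+2)*a^2) ((2*H+1)*(2*H+2)*(2*t)) t := by
      have := (hasDerivAt_pow 2 t).const_mul ((2*H+1)*(2*H+2))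
      exact this.congr_deriv (by push_cast; ring)
    have p2 := ((hasDerivAt_id t).const_mul (2*H+2)).mul (e3.sub e4)
    have total := (((p1.add e1).add e2).sub_const 2).sub p2
    show HasDerivAt (fun a : ℝ => (2*H+1)*(2*H+2)*a^2 + (1+a)^(2*H+2) + (1-a)^(2*H+2) - 2
      - (2*H+2)*a*((1+a)^(2*H+1) - (1-a)^(2*H+1))) _ t
    simp only [id_eq, Pi.sub_apply] at total
    exact total.congr_deriv (by ring)
  · intro t ht
    simpa using hasDerivAt_pow 4 t
  · intro t ht
    have := ht.1; positivity
  · have hc : Continuous (Nf H) := by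
      unfold Nf
      have c1 : Continuous fun a : ℝ => (1+a)^(2*H+2) :=
        (continuous_const.add continuous_id).rpow_const (fun a => Or.inr (by linarith))
      have c2 : Continuous fun a : ℝ => (1-a)^(2*H+2) :=
        (continuous_const.sub continuous_id).rpow_const (fun a => Or.inr (by linarith))
      have c3 : Continuous fun a : ℝ => (1+a)^(2*H+1) :=
        (continuous_const.add continuous_id).rpow_const (fun a => Or.inr (by linarith))
      have c4 : Continuous fun a : ℝ => (1-a)^(2*H+1) :=
        (continuous_const.sub continuous_id).rpow_const (fun a => Or.inr (by linarith))
      fun_prop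
    have h0 : Nf H 0 = 0 := by
      simp [Nf, Real.one_rpow]
      norm_num
    have := hc.tendsto 0
    rw [h0] at this
    exact this.mono_left nhdsWithin_le_nhds
  · have : Tendsto (fun a : ℝ => a^4) (𝓝 (0:ℝ)) (𝓝 0) := by
      simpa using (continuous_pow 4).tendsto (0:ℝ)
    exact this.mono_left nhdsWithin_le_nhds
  · have h := (lhop2 H ⟨hH0, hH1⟩).const_mul ((2*H+2)*(2*H+1)/4)
    have hval : (2*H+2)*(2*H+1)/4 * (-(2*H*(2*H-1))) = -((2*H+2)*(2*H+1)*(2*H)*(2*H-1))/4 := by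
      ring
    rw [hval] at h
    apply h.congr'
    filter_upwards [self_mem_nhdsWithin] with t (ht : t ∈ Ioi (0:ℝ))
    have htne : t ≠ 0 := ne_of_gt ht
    field_simp

theorem stmt5 (H : ℝ) (hH : H ∈ Set.Ioo (0:ℝ) 1) :
    Tendsto (fun x : ℝ =>
      ((∫ u in (0:ℝ)..1, ∫ s in (0:ℝ)..1,
          (x ^ (2*H) + (x + u - s) ^ (2*H) - (x + u) ^ (2*H) - (x - u) ^ (2*H)))
        - (-(H * (2*H - 1) / 2) * x ^ (2*H - 2))) / x ^ (2*H - 2))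
      atTop (nhds 0) := by
  obtain ⟨hH0, hH1⟩ := hH
  have hD1 : (2*H+1 : ℝ) ≠ 0 := ne_of_gt (by linarith)
  have hD2 : (2*H+2 : ℝ) ≠ 0 := ne_of_gt (by linarith)
  have key : ∀ x : ℝ, 2 ≤ x →
      (∫ u in (0:ℝ)..1, ∫ s in (0:ℝ)..1,
          (x ^ (2*H) + (x + u - s) ^ (2*H) - (x + u) ^ (2*H) - (x - u) ^ (2*H)))
      = x^(2*H-2) * (Nf H (1/x) / ((2*H+1)*(2*H+2)*(1/x)^4)) := by
    intro x hx
    have hx0 : (0:ℝ) < x := by linarith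
    have inner : ∀ u ∈ Set.uIcc (0:ℝ) 1,
        (∫ s in (0:ℝ)..1, (x ^ (2*H) + (x + u - s) ^ (2*H) - (x + u) ^ (2*H) - (x - u) ^ (2*H)))
        = x^(2*H) - (x+u)^(2*H) - (x-u)^(2*H)
          + ((x+u)^(2*H+1) - (x+u-1)^(2*H+1))/(2*H+1) := by
      intro u hu
      rw [Set.uIcc_of_le (by norm_num : (0:ℝ) ≤ 1)] at hu
      obtain ⟨hu0, hu1⟩ := hu
      have hFTC := intervalIntegral.integral_eq_sub_of_hasDerivAt
        (f := fun s => (x^(2*H) - (x+u)^(2*H) - (x-u)^(2*H))*s - (x+u-s)^(2*H+1)/(2*H+1))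
        (f' := fun s => x ^ (2*H) + (x + u - s) ^ (2*H) - (x + u) ^ (2*H) - (x - u) ^ (2*H))
        (a := 0) (b := 1) ?_ ?_
      · rw [hFTC]
        simp only [add_sub_cancel_right, add_zero, sub_zero, mul_one, mul_zero]
        ring
      · intro s hs
        rw [Set.uIcc_of_le (by norm_num : (0:ℝ) ≤ 1)] at hs
        have hb : x + u - s ≠ 0 := by
          intro hc; have := hs.2; linarith
        have h1 : HasDerivAt (fun s : ℝ => x + u - s) (-1) s := by
          simpa using (hasDerivAt_id s).const_sub (x+u)
        have h2 := h1.rpow_const (p := 2*H+1) (Or.inl hb)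
        rw [show (2*H+1)-1 = 2*H by ring] at h2
        have h4 := ((hasDerivAt_id s).const_mul
          (x^(2*H) - (x+u)^(2*H) - (x-u)^(2*H))).sub (h2.div_const (2*H+1))
        simp only [id_eq] at h4
        exact h4.congr_deriv (by field_simp; ring)
      · apply Continuous.intervalIntegrable
        have c1 : Continuous fun s : ℝ => (x+u-s)^(2*H) :=
          (continuous_const.sub continuous_id).rpow_const (fun s => Or.inr (by linarith))
        exact ((continuous_const.add c1).sub continuous_const).sub continuous_const
    rw [intervalIntegral.integral_congr inner]
    have houter := intervalIntegral.integral_eq_sub_of_hasDerivAt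
      (f := fun u => x^(2*H)*u - (x+u)^(2*H+1)/(2*H+1) + (x-u)^(2*H+1)/(2*H+1)
          + ((x+u)^(2*H+2) - (x+u-1)^(2*H+2))/((2*H+1)*(2*H+2)))
      (f' := fun u => x^(2*H) - (x+u)^(2*H) - (x-u)^(2*H)
          + ((x+u)^(2*H+1) - (x+u-1)^(2*H+1))/(2*H+1))
      (a := 0) (b := 1) ?_ ?_
    · rw [houter]
      have hxne : x ≠ 0 := ne_of_gt hx0
      have hu1 : (0:ℝ) < 1 + 1/x := by positivity
      have hinv : 1/x < 1 := by rw [div_lt_one hx0]; linarith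
      have hu2 : (0:ℝ) < 1 - 1/x := by linarith
      have hm1 : x * (1 + 1/x) = x + 1 := by field_simp
      have hm2 : x * (1 - 1/x) = x - 1 := by field_simp
      have hp1 : ∀ e : ℝ, (x+1)^e = x^e * (1+1/x)^e := fun e => by
        rw [← hm1, Real.mul_rpow hx0.le hu1.le]
      have hp2 : ∀ e : ℝ, (x-1)^e = x^e * (1-1/x)^e := fun e => by
        rw [← hm2, Real.mul_rpow hx0.le hu2.le]
      have hq : ∀ y : ℝ, 0 < y → y^(2*H+1) = y^(2*H) * y := fun y hy => by
        rw [Real.rpow_add hy, Real.rpow_one]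
      have hq2 : ∀ y : ℝ, 0 < y → y^(2*H+2) = y^(2*H) * y^2 := fun y hy => by
        rw [Real.rpow_add hy, show ((2:ℝ)) = ((2:ℕ):ℝ) by norm_num, Real.rpow_natCast]
      have hxm : x^(2*H-2) = x^(2*H) / x^2 := by
        rw [Real.rpow_sub hx0, show ((2:ℝ)) = ((2:ℕ):ℝ) by norm_num, Real.rpow_natCast]
      simp only [Nf, add_sub_cancel_right, add_zero, sub_zero, mul_one, mul_zero]
      rw [hp1 (2*H+1), hp1 (2*H+2), hp2 (2*H+1), hp2 (2*H+2)]
      rw [hq _ hx0, hq _ hu1, hq _ hu2, hq2 _ hx0, hq2 _ hu1, hq2 _ hu2, hxm]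
      field_simp
      ring
    · intro u hu
      rw [Set.uIcc_of_le (by norm_num : (0:ℝ) ≤ 1)] at hu
      obtain ⟨hu0, hu1⟩ := hu
      have hb1 : x + u ≠ 0 := by intro hc; linarith
      have hb2 : x - u ≠ 0 := by intro hc; linarith
      have hb3 : x + u - 1 ≠ 0 := by intro hc; linarith
      have d1 : HasDerivAt (fun u : ℝ => x + u) 1 u := by
        simpa using (hasDerivAt_id u).const_add x
      have d2 : HasDerivAt (fun u : ℝ => x - u) (-1) u := by
        simpa using (hasDerivAt_id u).const_sub x
      have d3 : HasDerivAt (fun u : ℝ => x + u - 1) 1 u := d1.sub_const 1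
      have e1 := d1.rpow_const (p := 2*H+1) (Or.inl hb1)
      have e2 := d2.rpow_const (p := 2*H+1) (Or.inl hb2)
      have e1' := d1.rpow_const (p := 2*H+2) (Or.inl hb1)
      have e3' := d3.rpow_const (p := 2*H+2) (Or.inl hb3)
      rw [show (2*H+1)-1 = 2*H by ring] at e1 e2
      rw [show (2*H+2)-1 = 2*H+1 by ring] at e1' e3'
      have total := ((((hasDerivAt_id u).const_mul (x^(2*H))).sub
        (e1.div_const (2*H+1))).add (e2.div_const (2*H+1))).add
        ((e1'.sub e3').div_const ((2*H+1)*(2*H+2)))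
      simp only [id_eq] at total
      exact total.congr_deriv (by field_simp; ring)
    · apply Continuous.intervalIntegrable
      have c1 : Continuous fun u : ℝ => (x+u)^(2*H) :=
        (continuous_const.add continuous_id).rpow_const (fun u => Or.inr (by linarith))
      have c2 : Continuous fun u : ℝ => (x-u)^(2*H) :=
        (continuous_const.sub continuous_id).rpow_const (fun u => Or.inr (by linarith))
      have c3 : Continuous fun u : ℝ => (x+u)^(2*H+1) :=
        (continuous_const.add continuous_id).rpow_const (fun u => Or.inr (by linarith))
      have c4 : Continuous fun u : ℝ => (x+u-1)^(2*H+1) :=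
        ((continuous_const.add continuous_id).sub continuous_const).rpow_const
          (fun u => Or.inr (by linarith))
      exact ((continuous_const.sub c1).sub c2).add ((c3.sub c4).div_const (2*H+1))
  -- limit part
  have hψ : Tendsto (fun a : ℝ => Nf H a / ((2*H+1)*(2*H+2)*a^4)) (𝓝[>] (0:ℝ))
      (𝓝 (-(H * (2*H-1) / 2))) := by
    have h := (lhopN H ⟨hH0, hH1⟩).div_const ((2*H+1)*(2*H+2))
    have hval : (-((2*H+2)*(2*H+1)*(2*H)*(2*H-1))/4) / ((2*H+1)*(2*H+2))
        = -(H * (2*H-1) / 2) := by field_simp; ring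
    rw [hval] at h
    apply h.congr
    intro a
    rw [div_div, mul_comm ((2*H+1)*(2*H+2))]
  have hcomp : Tendsto (fun x : ℝ => Nf H (1/x) / ((2*H+1)*(2*H+2)*(1/x)^4)) atTop
      (𝓝 (-(H * (2*H-1) / 2))) := by
    have htend : Tendsto (fun x : ℝ => 1/x) atTop (𝓝[>] (0:ℝ)) := by
      refine tendsto_nhdsWithin_of_tendsto_nhds_of_eventually_within _ ?_ ?_
      · simpa using tendsto_inv_atTop_zero
      · filter_upwards [eventually_gt_atTop (0:ℝ)] with x hx
        exact mem_Ioi.mpr (by positivity)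
    exact hψ.comp htend
  have hfinal := hcomp.sub_const (-(H * (2*H-1) / 2))
  rw [sub_self] at hfinal
  refine hfinal.congr' ?_
  filter_upwards [eventually_ge_atTop (2:ℝ)] with x hx
  have hx0 : (0:ℝ) < x := by linarith
  have hne : x^(2*H-2) ≠ 0 := (Real.rpow_pos_of_pos hx0 _).ne'
  rw [key x hx]
  field_simp
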